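/- arXiv:1910.01754 — 3 statements merged into one kernel-verified Lean document; each statement's English description precedes it below -/
import Mathlib

section
/- Let θ: ℝ → ℝ be a measurable nonnegative weight function. For any n ∈ ℕ, any real coefficients c₁, …, cₙ ∈ ℝ, and any integrable functions I₁, …, Iₙ : ℝ → ℝ such that for every pair (i, j) the quantity D_{ij} = ∫ θ(ξ)(|Î_i(ξ)| − |Î_j(ξ)|)² dξ is finite, the spectral-distance (SpeD) correlation function is a positive semi-definite kernel: ∑_{i=1}^{n} ∑_{j=1}^{n} c_i c_j exp(−∫ θ(ξ)(|Î_i(ξ)| − |Î_j(ξ)|)² dξ) ≥ 0. -/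
open MeasureTheory Real
open scoped RealInnerProductSpace

/-- A matrix admits a Gram-type decomposition. -/
def HasGramDecomp {n : ℕ} (M : Matrix (Fin n) (Fin n) ℝ) : Prop :=
  ∃ (m : ℕ) (w : Fin m → Fin n → ℝ), ∀ i j, M i j = ∑ k, w k i * w k j

lemma hasGramDecomp_of_posSemidef {n : ℕ} {M : Matrix (Fin n) (Fin n) ℝ}
    (hM : M.PosSemidef) : HasGramDecomp M := by
  obtain ⟨m, v, hv⟩ := Matrix.posSemidef_iff_eq_sum_vecMulVec.mp hM
  refine ⟨m, fun k i => v k i, fun i j => ?_⟩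
  simp [hv, Matrix.sum_apply, Matrix.vecMulVec_apply]

lemma HasGramDecomp.quadform_nonneg {n : ℕ} {M : Matrix (Fin n) (Fin n) ℝ}
    (hM : HasGramDecomp M) (c : Fin n → ℝ) :
    0 ≤ ∑ i, ∑ j, c i * c j * M i j := by
  obtain ⟨m, w, hw⟩ := hM
  have h1 : ∑ i, ∑ j, c i * c j * M i j
      = ∑ i, ∑ k, ∑ j, (c i * w k i) * (c j * w k j) := by
    refine Finset.sum_congr rfl fun i _ => ?_
    rw [Finset.sum_comm]
    refine Finset.sum_congr rfl fun j _ => ?_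
    rw [hw, Finset.mul_sum]
    exact Finset.sum_congr rfl fun k _ => by ring
  rw [h1, Finset.sum_comm]
  refine Finset.sum_nonneg fun k _ => ?_
  have h2 : ∑ i, ∑ j, (c i * w k i) * (c j * w k j) = (∑ i, c i * w k i) ^ 2 := by
    rw [sq, Finset.sum_mul_sum]
  rw [h2]
  exact sq_nonneg _

lemma HasGramDecomp.entrywise_mul {n : ℕ} {M N : Matrix (Fin n) (Fin n) ℝ}
    (hM : HasGramDecomp M) (hN : HasGramDecomp N) :
    HasGramDecomp (Matrix.of fun i j => M i j * N i j) := by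
  obtain ⟨m₁, w, hw⟩ := hM
  obtain ⟨m₂, v, hv⟩ := hN
  refine ⟨m₁ * m₂, fun k i => w (finProdFinEquiv.symm k).1 i * v (finProdFinEquiv.symm k).2 i,
    fun i j => ?_⟩
  simp only [Matrix.of_apply]
  rw [hw, hv, Finset.sum_mul_sum]
  have h := Fintype.sum_equiv finProdFinEquiv
    (fun p : Fin m₁ × Fin m₂ => w p.1 i * w p.1 j * (v p.2 i * v p.2 j))
    (fun k => w (finProdFinEquiv.symm k).1 i * v (finProdFinEquiv.symm k).2 i *
      (w (finProdFinEquiv.symm k).1 j * v (finProdFinEquiv.symm k).2 j))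
    (fun p => by simp only [Equiv.symm_apply_apply]; ring)
  rw [← h, Fintype.sum_prod_type]

lemma HasGramDecomp.entrywise_pow {n : ℕ} {M : Matrix (Fin n) (Fin n) ℝ}
    (hM : HasGramDecomp M) (k : ℕ) :
    HasGramDecomp (Matrix.of fun i j => M i j ^ k) := by
  induction k with
  | zero => exact ⟨1, fun _ _ => 1, fun i j => by simp⟩
  | succ k ih =>
    have h := hM.entrywise_mul ih
    obtain ⟨m, w, hw⟩ := h
    refine ⟨m, w, fun i j => ?_⟩
    have := hw i j
    simp only [Matrix.of_apply] at this ⊢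
    rw [pow_succ, mul_comm (M i j ^ k), ← this]

lemma HasGramDecomp.exp_quadform_nonneg {n : ℕ} {M : Matrix (Fin n) (Fin n) ℝ}
    (hM : HasGramDecomp M) (c : Fin n → ℝ) :
    0 ≤ ∑ i, ∑ j, c i * c j * Real.exp (M i j) := by
  have hexp : ∀ x : ℝ, Real.exp x = ∑' k : ℕ, x ^ k / (Nat.factorial k : ℝ) := by
    intro x
    rw [Real.exp_eq_exp_ℝ, NormedSpace.exp_eq_tsum_div]
  have hsum : ∀ i j : Fin n,
      Summable (fun k : ℕ => c i * c j * (M i j ^ k / (Nat.factorial k : ℝ))) :=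
    fun i j => (Real.summable_pow_div_factorial (M i j)).mul_left _
  calc (0:ℝ) ≤ ∑' k : ℕ, ∑ i, ∑ j, c i * c j * (M i j ^ k / (Nat.factorial k : ℝ)) := by
        refine tsum_nonneg fun k => ?_
        have hpsd := (hM.entrywise_pow k).quadform_nonneg c
        simp only [Matrix.of_apply] at hpsd
        have heq : ∑ i, ∑ j, c i * c j * (M i j ^ k / (Nat.factorial k : ℝ)) =
            (∑ i, ∑ j, c i * c j * M i j ^ k) / (Nat.factorial k : ℝ) := by
          rw [Finset.sum_div]
          exact Finset.sum_congr rfl fun i _ => by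
            rw [Finset.sum_div]
            exact Finset.sum_congr rfl fun j _ => by ring
        rw [heq]
        positivity
    _ = ∑ i, ∑ j, c i * c j * Real.exp (M i j) := by
        rw [Summable.tsum_finsetSum (fun i _ => summable_sum (fun j _ => hsum i j))]
        refine Finset.sum_congr rfl fun i _ => ?_
        rw [Summable.tsum_finsetSum (fun j _ => hsum i j)]
        refine Finset.sum_congr rfl fun j _ => ?_
        rw [tsum_mul_left, hexp]

/-- The Fourier transform of a real-valued function `I : ℝ → ℝ`,
`Î(ξ) = ∫ I(t) e^{−2πi t ξ} dt`. -/
noncomputable def fourierOfReal (I : ℝ → ℝ) : ℝ → ℂ :=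
  FourierTransform.fourier (fun t : ℝ => (I t : ℂ))

/-- The SpeD correlation function is a positive semi-definite kernel. -/
theorem speD_correlation_posSemidef
    (θ : ℝ → ℝ) (hθ_meas : Measurable θ) (hθ_nonneg : ∀ ξ, 0 ≤ θ ξ)
    (n : ℕ) (c : Fin n → ℝ) (I : Fin n → ℝ → ℝ)
    (hI : ∀ i, Integrable (I i))
    (hD : ∀ i j, Integrable (fun ξ =>
      θ ξ * (‖fourierOfReal (I i) ξ‖ - ‖fourierOfReal (I j) ξ‖) ^ 2)) :
    0 ≤ ∑ i, ∑ j, c i * c j *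
      Real.exp (-∫ ξ, θ ξ *
        (‖fourierOfReal (I i) ξ‖ - ‖fourierOfReal (I j) ξ‖) ^ 2) := by
  rcases isEmpty_or_nonempty (Fin n) with hemp | hne
  · simp [Finset.univ_eq_empty]
  set F : Fin n → ℝ → ℝ := fun i ξ => ‖fourierOfReal (I i) ξ‖ with hFdef
  have hFcont : ∀ i, Continuous (F i) := by
    intro i
    apply continuous_norm.comp
    exact VectorFourier.fourierIntegral_continuous Real.continuous_fourierChar
      (by exact continuous_inner) (hI i).ofReal
  obtain ⟨i0⟩ := hne
  set h : Fin n → ℝ → ℝ := fun i ξ => Real.sqrt (θ ξ) * (F i ξ - F i0 ξ) with hhdef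
  have hhm : ∀ i, AEStronglyMeasurable (h i) volume := by
    intro i
    exact ((hθ_meas.sqrt).mul
      (((hFcont i).sub (hFcont i0)).measurable)).aestronglyMeasurable
  have hsq : ∀ i j ξ, (h i ξ - h j ξ) ^ 2 = θ ξ * (F i ξ - F j ξ) ^ 2 := by
    intro i j ξ
    have : h i ξ - h j ξ = Real.sqrt (θ ξ) * (F i ξ - F j ξ) := by simp [hhdef]; ring
    rw [this, mul_pow, Real.sq_sqrt (hθ_nonneg ξ)]
  have hmem : ∀ i, MemLp (h i) 2 volume := by
    intro i
    rw [memLp_two_iff_integrable_sq (hhm i)]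
    refine (hD i i0).congr (Filter.Eventually.of_forall fun ξ => ?_)
    have := hsq i i0 ξ
    simp only [sub_zero] at this ⊢
    rw [← this]
    simp [hhdef]
  set g : Fin n → Lp ℝ 2 (volume : Measure ℝ) := fun i => (hmem i).toLp (h i) with hgdef
  -- the inner product of differences recovers the integrals D_ij
  have hinner_sub : ∀ i j, ⟪g i - g j, g i - g j⟫
      = ∫ ξ, θ ξ * (F i ξ - F j ξ) ^ 2 := by
    intro i j
    rw [MeasureTheory.L2.inner_def]
    have hae : ∀ᵐ ξ : ℝ, (g i - g j) ξ = h i ξ - h j ξ := by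
      filter_upwards [Lp.coeFn_sub (g i) (g j),
        (hmem i).coeFn_toLp, (hmem j).coeFn_toLp] with ξ h1 h2 h3
      rw [hgdef] at h1 ⊢
      rw [h1, Pi.sub_apply, h2, h3]
    refine integral_congr_ae ?_
    filter_upwards [hae] with ξ hξ
    rw [hξ]
    have := hsq i j ξ
    simp only [RCLike.inner_apply, starRingEnd_apply, star_trivial, ← sq, this]
  set A : Fin n → ℝ := fun i => ⟪g i, g i⟫ with hAdef
  set M : Matrix (Fin n) (Fin n) ℝ := Matrix.of fun i j => 2 * ⟪g i, g j⟫ with hMdef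
  have hexpand : ∀ i j, (∫ ξ, θ ξ * (F i ξ - F j ξ) ^ 2)
      = A i + A j - M i j := by
    intro i j
    rw [← hinner_sub i j, hMdef, hAdef]
    simp only [Matrix.of_apply, inner_sub_left, inner_sub_right]
    rw [real_inner_comm (g j) (g i)]
    ring
  have hpsd : M.PosSemidef := by
    refine Matrix.PosSemidef.of_dotProduct_mulVec_nonneg ?_ ?_
    · ext i j
      simp only [hMdef, Matrix.conjTranspose_apply, Matrix.of_apply, star_trivial]
      rw [real_inner_comm]
    · intro x
      simp only [star_trivial]
      have hform : dotProduct x (M.mulVec x) = 2 * ⟪∑ i, x i • g i, ∑ j, x j • g j⟫ := by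
        rw [inner_sum]
        simp only [sum_inner, real_inner_smul_left, real_inner_smul_right]
        simp only [dotProduct, Matrix.mulVec, dotProduct, hMdef, Matrix.of_apply,
          Finset.mul_sum]
        rw [Finset.sum_comm]
        refine Finset.sum_congr rfl fun i _ => ?_
        exact Finset.sum_congr rfl fun j _ => by ring
      rw [hform]
      have h0 : (0:ℝ) ≤ ⟪∑ i, x i • g i, ∑ i, x i • g i⟫ := real_inner_self_nonneg
      linarith
  have keyterm : ∀ i j, c i * c j *
      Real.exp (-∫ ξ, θ ξ *
        (‖fourierOfReal (I i) ξ‖ - ‖fourierOfReal (I j) ξ‖) ^ 2)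
      = (c i * Real.exp (-A i)) * (c j * Real.exp (-A j)) * Real.exp (M i j) := by
    intro i j
    have h1 : (∫ ξ, θ ξ *
        (‖fourierOfReal (I i) ξ‖ - ‖fourierOfReal (I j) ξ‖) ^ 2)
        = A i + A j - M i j := hexpand i j
    rw [h1]
    have h2 : -(A i + A j - M i j) = (-A i) + ((-A j) + M i j) := by ring
    rw [h2, Real.exp_add, Real.exp_add]
    ring
  rw [show (∑ i, ∑ j, c i * c j *
      Real.exp (-∫ ξ, θ ξ *
        (‖fourierOfReal (I i) ξ‖ - ‖fourierOfReal (I j) ξ‖) ^ 2))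
      = ∑ i, ∑ j, (c i * Real.exp (-A i)) * (c j * Real.exp (-A j)) * Real.exp (M i j) from
    Finset.sum_congr rfl fun i _ => Finset.sum_congr rfl fun j _ => keyterm i j]
  exact (hasGramDecomp_of_posSemidef hpsd).exp_quadform_nonneg (fun i => c i * Real.exp (-A i))
end

section
/- Fix p ∈ ℕ with p ≥ 1 and nonnegative weights θ₀, …, θ_{p−1} ≥ 0. For x ∈ ℝ^p let x̂_k = ∑_{l=0}^{p−1} x_l e^{−2πi l k / p} denote its discrete Fourier transform. Then the discrete SpeD kernel ρ(x, z) = exp(−∑_{k=0}^{p−1} θ_k (|x̂_k| − |ẑ_k|)²) is a positive semi-definite kernel on ℝ^p: for any n ∈ ℕ, any c₁, …, cₙ ∈ ℝ, and any x₁, …, xₙ ∈ ℝ^p, ∑_{i=1}^{n} ∑_{j=1}^{n} c_i c_j ρ(x_i, x_j) ≥ 0. -/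
open scoped Real

/-- The discrete Fourier transform of `x ∈ ℝ^p`: `x̂_k = ∑_{l=0}^{p−1} x_l e^{−2πi l k / p}`. -/
noncomputable def dft (p : ℕ) (x : Fin p → ℝ) (k : Fin p) : ℂ :=
  ∑ l : Fin p, (x l : ℂ) *
    Complex.exp (-2 * (π : ℂ) * Complex.I * (l : ℕ) * (k : ℕ) / (p : ℂ))

/-- The discrete SpeD kernel with nonnegative weights `θ₀, …, θ_{p−1}`:
`ρ(x, z) = exp(−∑_k θ_k (|x̂_k| − |ẑ_k|)²)`. -/
noncomputable def discreteSpeD (p : ℕ) (θ : Fin p → ℝ) (x z : Fin p → ℝ) : ℝ :=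
  Real.exp (-∑ k, θ k * (‖dft p x k‖ - ‖dft p z k‖) ^ 2)

lemma inner_pow_psd (n p m : ℕ) (d : Fin n → ℝ) (u : Fin n → Fin p → ℝ) :
    0 ≤ ∑ i, ∑ j, d i * d j * (∑ k, u i k * u j k) ^ m := by
  have key : ∀ i j : Fin n, d i * d j * (∑ k, u i k * u j k) ^ m
      = ∑ f : Fin m → Fin p, (d i * ∏ t, u i (f t)) * (d j * ∏ t, u j (f t)) := by
    intro i j
    rw [Fintype.sum_pow, Finset.mul_sum]
    exact Finset.sum_congr rfl fun f _ => by rw [Finset.prod_mul_distrib]; ring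
  simp only [key]
  calc (0:ℝ) ≤ ∑ f : Fin m → Fin p, (∑ i, d i * ∏ t, u i (f t)) ^ 2 :=
        Finset.sum_nonneg fun f _ => sq_nonneg _
    _ = ∑ f : Fin m → Fin p, ∑ i, ∑ j,
          (d i * ∏ t, u i (f t)) * (d j * ∏ t, u j (f t)) := by
        refine Finset.sum_congr rfl fun f _ => ?_
        rw [sq, Finset.sum_mul_sum]
    _ = ∑ i, ∑ f : Fin m → Fin p, ∑ j,
          (d i * ∏ t, u i (f t)) * (d j * ∏ t, u j (f t)) := Finset.sum_comm
    _ = ∑ i, ∑ j, ∑ f : Fin m → Fin p,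
          (d i * ∏ t, u i (f t)) * (d j * ∏ t, u j (f t)) :=
        Finset.sum_congr rfl fun i _ => Finset.sum_comm

lemma exp_inner_psd (n p : ℕ) (d : Fin n → ℝ) (u : Fin n → Fin p → ℝ) :
    0 ≤ ∑ i, ∑ j, d i * d j * Real.exp (∑ k, u i k * u j k) := by
  have hexp : ∀ y : ℝ, Real.exp y = ∑' m : ℕ, y ^ m / m.factorial := fun y => by
    rw [Real.exp_eq_exp_ℝ, NormedSpace.exp_eq_tsum_div]
  have hsum : ∀ (i j : Fin n), Summable (fun m : ℕ =>
      d i * d j * ((∑ k, u i k * u j k) ^ m / m.factorial)) :=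
    fun i j => (Real.summable_pow_div_factorial _).mul_left _
  calc (0:ℝ) ≤ ∑' m : ℕ, ∑ i, ∑ j,
        d i * d j * ((∑ k, u i k * u j k) ^ m / m.factorial) := by
        refine tsum_nonneg fun m => ?_
        have h1 := inner_pow_psd n p m d u
        have h2 : ∑ i, ∑ j, d i * d j * ((∑ k, u i k * u j k) ^ m / m.factorial)
            = (∑ i, ∑ j, d i * d j * (∑ k, u i k * u j k) ^ m) / m.factorial := by
          simp only [Finset.sum_div, mul_div_assoc]
        rw [h2]
        positivity
    _ = ∑ i, ∑ j, ∑' m : ℕ,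
        d i * d j * ((∑ k, u i k * u j k) ^ m / m.factorial) := by
        rw [Summable.tsum_finsetSum (fun i _ => summable_sum (fun j _ => hsum i j))]
        exact Finset.sum_congr rfl fun i _ => Summable.tsum_finsetSum fun j _ => hsum i j
    _ = ∑ i, ∑ j, d i * d j * Real.exp (∑ k, u i k * u j k) := by
        refine Finset.sum_congr rfl fun i _ => Finset.sum_congr rfl fun j _ => ?_
        rw [hexp, tsum_mul_left]

/-- The discrete SpeD kernel is a positive semi-definite kernel on `ℝ^p`. -/
theorem discreteSpeD_posSemidef
    (p : ℕ) (hp : 1 ≤ p) (θ : Fin p → ℝ) (hθ : ∀ k, 0 ≤ θ k)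
    (n : ℕ) (c : Fin n → ℝ) (x : Fin n → Fin p → ℝ) :
    0 ≤ ∑ i, ∑ j, c i * c j * discreteSpeD p θ (x i) (x j) := by
  set a : Fin n → Fin p → ℝ := fun i k => ‖dft p (x i) k‖ with ha
  set u : Fin n → Fin p → ℝ := fun i k => Real.sqrt (2 * θ k) * a i k with hu
  set Q : Fin n → ℝ := fun i => ∑ k, θ k * a i k ^ 2 with hQ
  set d : Fin n → ℝ := fun i => c i * Real.exp (-Q i) with hd
  have key : ∀ i j : Fin n, c i * c j * discreteSpeD p θ (x i) (x j)
      = d i * d j * Real.exp (∑ k, u i k * u j k) := by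
    intro i j
    have huu : ∀ k, u i k * u j k = 2 * θ k * (a i k * a j k) := by
      intro k
      have h2 : (0:ℝ) ≤ 2 * θ k := by have := hθ k; linarith
      calc u i k * u j k = Real.sqrt (2 * θ k) * Real.sqrt (2 * θ k) * (a i k * a j k) := by
            rw [hu]; ring
        _ = 2 * θ k * (a i k * a j k) := by rw [Real.mul_self_sqrt h2]
    have hsplit : -∑ k, θ k * (a i k - a j k) ^ 2
        = -Q i + -Q j + ∑ k, u i k * u j k := by
      simp only [hQ, huu, ← Finset.sum_add_distrib, ← Finset.sum_neg_distrib]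
      exact Finset.sum_congr rfl fun k _ => by ring
    rw [discreteSpeD]
    show c i * c j * Real.exp (-∑ k, θ k * (a i k - a j k) ^ 2) = _
    rw [hsplit, Real.exp_add, Real.exp_add, hd]
    ring
  simp only [key]
  exact exp_inner_psd n p d u
end

section
/- Fix p ∈ ℕ with p ≥ 1, nonnegative weights θ₀, …, θ_{p−1} ≥ 0, and θ_d ≥ 0. The separable correlation function on ℝ × ℝ^p defined by ρ_s((d₁, x₁), (d₂, x₂)) = ρ(x₁, x₂) · exp(−θ_d (d₁ − d₂)²), where ρ is the discrete SpeD kernel, is a positive semi-definite kernel: for any n ∈ ℕ, any c₁, …, cₙ ∈ ℝ, and any pairs (d₁, x₁), …, (dₙ, xₙ) ∈ ℝ × ℝ^p, ∑_{i=1}^{n} ∑_{j=1}^{n} c_i c_j ρ_s((d_i, x_i), (d_j, x_j)) ≥ 0. -/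
open scoped Real

/-- The separable correlation `ρ_s((d₁, x₁), (d₂, x₂)) = ρ(x₁, x₂)·exp(−θ_d(d₁ − d₂)²)`,
where `ρ` is the discrete SpeD kernel and `d` is the scalar fiber diameter. -/
noncomputable def separableSpeD (p : ℕ) (θ : Fin p → ℝ) (θd : ℝ)
    (v₁ v₂ : ℝ × (Fin p → ℝ)) : ℝ :=
  discreteSpeD p θ v₁.2 v₂.2 * Real.exp (-θd * (v₁.1 - v₂.1) ^ 2)

lemma real_exp_tsum (x : ℝ) : Real.exp x = ∑' m : ℕ, x ^ m / (m.factorial : ℝ) := by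
  rw [Real.exp_eq_exp_ℝ, NormedSpace.exp_eq_tsum_div]

/-- Products of Gaussian kernels are positive semi-definite. -/
lemma gauss_prod_psd {n : ℕ} {ι : Type*} [DecidableEq ι] (t : ι → ℝ) (ht : ∀ k, 0 ≤ t k)
    (f : ι → Fin n → ℝ) (s : Finset ι) (c : Fin n → ℝ) :
    0 ≤ ∑ i, ∑ j, c i * c j * ∏ k ∈ s, Real.exp (-(t k * (f k i - f k j) ^ 2)) := by
  induction s using Finset.induction_on generalizing c with
  | empty =>
      simp only [Finset.prod_empty, mul_one]
      have : ∑ i, ∑ j, c i * c j = (∑ i, c i) ^ 2 := by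
        rw [sq, Finset.sum_mul_sum]
      rw [this]; positivity
  | insert a s ha ih =>
      set P : Fin n → Fin n → ℝ := fun i j => ∏ k ∈ s, Real.exp (-(t k * (f k i - f k j) ^ 2)) with hP
      set b : ℕ → Fin n → ℝ := fun m i => c i * Real.exp (-(t a * f a i ^ 2)) * f a i ^ m with hb
      set F : ℕ → Fin n → Fin n → ℝ :=
        fun m i j => (2 * t a) ^ m / (m.factorial : ℝ) * (b m i * b m j * P i j) with hF
      have key : ∀ i j, c i * c j * ∏ k ∈ insert a s, Real.exp (-(t k * (f k i - f k j) ^ 2))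
          = ∑' m : ℕ, F m i j := by
        intro i j
        have hsplit : Real.exp (-(t a * (f a i - f a j) ^ 2))
            = Real.exp (-(t a * f a i ^ 2)) * Real.exp (-(t a * f a j ^ 2)) *
              Real.exp (2 * t a * (f a i * f a j)) := by
          rw [← Real.exp_add, ← Real.exp_add]; congr 1; ring
        set C : ℝ := (c i * Real.exp (-(t a * f a i ^ 2))) *
          (c j * Real.exp (-(t a * f a j ^ 2))) * P i j with hC
        calc c i * c j * ∏ k ∈ insert a s, Real.exp (-(t k * (f k i - f k j) ^ 2))
            = C * Real.exp (2 * t a * (f a i * f a j)) := by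
              rw [Finset.prod_insert ha, hsplit, hC, hP]; ring
          _ = ∑' m : ℕ, C * ((2 * t a * (f a i * f a j)) ^ m / (m.factorial : ℝ)) := by
              rw [real_exp_tsum, tsum_mul_left]
          _ = ∑' m : ℕ, F m i j := by
              refine tsum_congr fun m => ?_
              rw [hF, hC, hb, mul_pow, mul_pow]; ring
      have hsum : ∀ i j : Fin n, Summable (fun m : ℕ => F m i j) := by
        intro i j
        refine ((Real.summable_pow_div_factorial (2 * t a * (f a i * f a j))).mul_left
          ((c i * Real.exp (-(t a * f a i ^ 2))) * (c j * Real.exp (-(t a * f a j ^ 2))) * P i j)).congr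
          fun m => ?_
        rw [hF, hb, mul_pow, mul_pow]; ring
      simp_rw [key]
      have h1 : ∀ i : Fin n, ∑ j, ∑' m : ℕ, F m i j = ∑' m : ℕ, ∑ j, F m i j :=
        fun i => (Summable.tsum_finsetSum fun j _ => hsum i j).symm
      simp_rw [h1]
      rw [(Summable.tsum_finsetSum fun i _ => summable_sum fun j _ => hsum i j).symm]
      refine tsum_nonneg fun m => ?_
      have hcoef : 0 ≤ (2 * t a) ^ m / (m.factorial : ℝ) := by
        have := ht a; positivity
      have hih := ih (b m)
      calc (0:ℝ) ≤ (2 * t a) ^ m / (m.factorial : ℝ) *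
            ∑ i, ∑ j, b m i * b m j * ∏ k ∈ s, Real.exp (-(t k * (f k i - f k j) ^ 2)) :=
              mul_nonneg hcoef hih
        _ = ∑ i, ∑ j, F m i j := by
              rw [Finset.mul_sum]
              refine Finset.sum_congr rfl fun i _ => ?_
              rw [Finset.mul_sum]

/-- The separable correlation function is a positive semi-definite kernel on `ℝ × ℝ^p`. -/
theorem separableSpeD_posSemidef
    (p : ℕ) (hp : 1 ≤ p) (θ : Fin p → ℝ) (hθ : ∀ k, 0 ≤ θ k) (θd : ℝ) (hθd : 0 ≤ θd)
    (n : ℕ) (c : Fin n → ℝ) (v : Fin n → ℝ × (Fin p → ℝ)) :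
    0 ≤ ∑ i, ∑ j, c i * c j * separableSpeD p θ θd (v i) (v j) := by
  set t : Option (Fin p) → ℝ := fun o => o.elim θd θ with hT
  set f : Option (Fin p) → Fin n → ℝ :=
    fun o i => o.elim (v i).1 (fun k => ‖dft p (v i).2 k‖) with hf
  have ht : ∀ k, 0 ≤ t k := by rintro (_ | k) <;> simp [hT, hθd, hθ]
  have hrw : ∀ i j, separableSpeD p θ θd (v i) (v j)
      = ∏ k ∈ Finset.univ, Real.exp (-(t k * (f k i - f k j) ^ 2)) := by
    intro i j
    rw [Fintype.prod_option]
    unfold separableSpeD discreteSpeD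
    rw [mul_comm]
    congr 1
    · simp [hT, hf, neg_mul]
    · rw [← Real.exp_sum]
      congr 1
      rw [← Finset.sum_neg_distrib]
      simp [hT, hf]
  simp_rw [hrw]
  exact gauss_prod_psd t ht f Finset.univ c
end
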